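/- arXiv:0908.2098 — 3 statements merged into one kernel-verified Lean document; each statement's English description precedes it below -/
import Mathlib

section
/- In the setting of the single-run MSE bound, if additionally π₀ = δ_x P^t (deterministic start at x followed by burn-in t), then MSE(Î_{t,n}) ≤ (‖|f_c|^p‖_V^{2/p}/n)·(1 + 2M_rγ_r/(1−γ_r))·(πV + M²γ^t V(x)/(n(1−γ))), where Î_{t,n} = (1/n)∑_{i=t}^{t+n−1} f(X_i). -/
open MeasureTheory ProbabilityTheory

/-- One step of the Markov chain on the level of distributions: μ ↦ μP. -/
noncomputable def kstep {X : Type*} [MeasurableSpace X] (P : Kernel X X)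
    (μ : Measure X) : Measure X := μ.bind (fun x => P x)

/-- n-step evolution: μ ↦ μPⁿ. -/
noncomputable def evolve {X : Type*} [MeasurableSpace X] (P : Kernel X X)
    (μ : Measure X) (n : ℕ) : Measure X := (kstep P)^[n] μ

section Aux
open Finset
variable {X : Type*} [MeasurableSpace X]

noncomputable def iterK (P : Kernel X X) : ℕ → Kernel X X
  | 0 => Kernel.id
  | (k+1) => P ∘ₖ iterK P k

instance iterK_markov (P : Kernel X X) [IsMarkovKernel P] (k : ℕ) :
    IsMarkovKernel (iterK P k) := by
  induction k with
  | zero => exact inferInstanceAs (IsMarkovKernel (Kernel.id : Kernel X X))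
  | succ k ih => exact inferInstanceAs (IsMarkovKernel (P ∘ₖ iterK P k))

lemma evolve_eq_bind (P : Kernel X X) (μ : Measure X) (k : ℕ) :
    evolve P μ k = μ.bind (iterK P k) := by
  induction k with
  | zero =>
      show μ = μ.bind (iterK P 0)
      have : ⇑(iterK P 0) = Measure.dirac := by
        funext a; exact Kernel.id_apply a
      rw [this, Measure.bind_dirac]
  | succ k ih =>
      show (kstep P)^[k+1] μ = _
      rw [Function.iterate_succ_apply']
      show kstep P (evolve P μ k) = _
      rw [ih]
      show (μ.bind (iterK P k)).bind (fun x => P x) = _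
      rw [Measure.bind_bind (Kernel.measurable _).aemeasurable (P.measurable).aemeasurable]
      have : ∀ a, (iterK P k a).bind ⇑P = iterK P (k+1) a := fun a =>
        (Kernel.comp_apply P (iterK P k) a).symm
      simp only [this]

lemma evolve_dirac (P : Kernel X X) (x : X) (k : ℕ) :
    evolve P (Measure.dirac x) k = iterK P k x := by
  rw [evolve_eq_bind, Measure.dirac_bind (Kernel.measurable _)]


lemma kint_eq (κ : Kernel X X) [IsMarkovKernel κ] {g : X → ℝ} (hg : Measurable g)
    (h0 : ∀ y, 0 ≤ g y) (x : X) :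
    ∫ y, g y ∂(κ x) = (∫⁻ y, ENNReal.ofReal (g y) ∂(κ x)).toReal := by
  rw [integral_eq_lintegral_of_nonneg_ae (Filter.Eventually.of_forall h0)
    hg.aestronglyMeasurable]

lemma measurable_kint (κ : Kernel X X) [IsMarkovKernel κ] {g : X → ℝ} (hg : Measurable g)
    (h0 : ∀ y, 0 ≤ g y) :
    Measurable (fun x => ∫ y, g y ∂(κ x)) := by
  simp_rw [kint_eq κ hg h0]
  exact (Measurable.lintegral_kernel (hg.ennreal_ofReal)).ennreal_toReal

lemma integral_bind_bounded (μ : Measure X) [IsProbabilityMeasure μ]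
    (κ : Kernel X X) [IsMarkovKernel κ] {g : X → ℝ} (hg : Measurable g)
    {K : ℝ} (h0 : ∀ y, 0 ≤ g y) (hK : ∀ y, g y ≤ K) :
    ∫ y, g y ∂(μ.bind ⇑κ) = ∫ x, ∫ y, g y ∂(κ x) ∂μ := by
  have hLlt : ∀ x : X, (∫⁻ y, ENNReal.ofReal (g y) ∂(κ x)) ≤ ENNReal.ofReal K := by
    intro x
    calc ∫⁻ y, ENNReal.ofReal (g y) ∂(κ x) ≤ ∫⁻ _, ENNReal.ofReal K ∂(κ x) :=
          lintegral_mono fun y => ENNReal.ofReal_le_ofReal (hK y)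
      _ = ENNReal.ofReal K := by simp
  have hbind : IsProbabilityMeasure (μ.bind ⇑κ) := by
    constructor
    rw [Measure.bind_apply MeasurableSet.univ (Kernel.measurable κ).aemeasurable]
    simp
  rw [integral_eq_lintegral_of_nonneg_ae (Filter.Eventually.of_forall h0)
    hg.aestronglyMeasurable,
    Measure.lintegral_bind (Kernel.measurable κ).aemeasurable hg.ennreal_ofReal.aemeasurable]
  have h2 : ∫ x, ∫ y, g y ∂(κ x) ∂μ
      = (∫⁻ x, ENNReal.ofReal (∫ y, g y ∂(κ x)) ∂μ).toReal := by
    rw [integral_eq_lintegral_of_nonneg_ae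
      (Filter.Eventually.of_forall fun x => integral_nonneg h0)
      (measurable_kint κ hg h0).aestronglyMeasurable]
  rw [h2]
  congr 1
  apply lintegral_congr
  intro x
  rw [kint_eq κ hg h0, ENNReal.ofReal_toReal (lt_of_le_of_lt (hLlt x) ENNReal.ofReal_lt_top).ne]

lemma integrable_of_trunc {V : X → ℝ} (hVm : Measurable V) (hV1 : ∀ x, 1 ≤ V x)
    (ν : Measure X) [IsProbabilityMeasure ν] {B : ℝ}
    (hB : ∀ K : ℕ, ∫ y, min (V y) K ∂ν ≤ B) :
    Integrable V ν ∧ ∫ y, V y ∂ν ≤ B := by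
  have hBnn : (0:ℝ) ≤ B := by
    have := hB 1
    have h1 : ∫ y, min (V y) ((1:ℕ):ℝ) ∂ν = 1 := by
      have : (fun y => min (V y) ((1:ℕ):ℝ)) = fun _ => (1:ℝ) := by
        funext y; simp [min_eq_right (hV1 y)]
      rw [this]; simp
    linarith [this, h1.ge]
  have htrint : ∀ K : ℕ, Integrable (fun y => min (V y) K) ν := by
    intro K
    refine Integrable.mono' (integrable_const (K:ℝ)) ((hVm.min measurable_const).aestronglyMeasurable) ?_
    refine Filter.Eventually.of_forall fun y => ?_
    rw [Real.norm_eq_abs, abs_of_nonneg (le_min (le_trans zero_le_one (hV1 y)) (Nat.cast_nonneg K))]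
    exact min_le_right _ _
  have key : (∫⁻ y, ENNReal.ofReal (V y) ∂ν) ≤ ENNReal.ofReal B := by
    have hsup : ∀ y, (⨆ K : ℕ, ENNReal.ofReal (min (V y) K)) = ENNReal.ofReal (V y) := by
      intro y
      apply le_antisymm
      · exact iSup_le fun K => ENNReal.ofReal_le_ofReal (min_le_left _ _)
      · have : ENNReal.ofReal (V y) = ENNReal.ofReal (min (V y) (⌈V y⌉₊:ℝ)) := by
          rw [min_eq_left (Nat.le_ceil _)]
        rw [this]
        exact le_iSup (fun K : ℕ => ENNReal.ofReal (min (V y) (K:ℝ))) ⌈V y⌉₊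
    have hmono : Monotone (fun K : ℕ => fun y => ENNReal.ofReal (min (V y) K)) := by
      intro a b hab
      intro y
      exact ENNReal.ofReal_le_ofReal (min_le_min le_rfl (by exact_mod_cast hab))
    calc (∫⁻ y, ENNReal.ofReal (V y) ∂ν)
        = ∫⁻ y, ⨆ K : ℕ, ENNReal.ofReal (min (V y) K) ∂ν := by
          apply lintegral_congr; intro y; rw [hsup]
      _ = ⨆ K : ℕ, ∫⁻ y, ENNReal.ofReal (min (V y) K) ∂ν := by
          exact lintegral_iSup (fun K => (hVm.min measurable_const).ennreal_ofReal) hmono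
      _ ≤ ENNReal.ofReal B := by
          apply iSup_le
          intro K
          rw [← ofReal_integral_eq_lintegral_ofReal (htrint K)
            (Filter.Eventually.of_forall fun y =>
              le_min (le_trans zero_le_one (hV1 y)) (Nat.cast_nonneg K))]
          exact ENNReal.ofReal_le_ofReal (hB K)
  have hint : Integrable V ν := by
    refine ⟨hVm.aestronglyMeasurable, ?_⟩
    rw [HasFiniteIntegral]
    calc (∫⁻ y, ‖V y‖ₑ ∂ν) = ∫⁻ y, ENNReal.ofReal (V y) ∂ν := by
          apply lintegral_congr; intro y
          exact Real.enorm_eq_ofReal (le_trans zero_le_one (hV1 y))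
      _ ≤ ENNReal.ofReal B := key
      _ < ⊤ := ENNReal.ofReal_lt_top
  refine ⟨hint, ?_⟩
  rw [integral_eq_lintegral_of_nonneg_ae
    (Filter.Eventually.of_forall fun y => le_trans zero_le_one (hV1 y))
    hVm.aestronglyMeasurable]
  exact ENNReal.toReal_le_of_le_ofReal hBnn key


lemma prob_bind (μ : Measure X) [IsProbabilityMeasure μ] (κ : Kernel X X) [IsMarkovKernel κ] :
    IsProbabilityMeasure (μ.bind ⇑κ) := by
  constructor
  rw [Measure.bind_apply MeasurableSet.univ (Kernel.measurable κ).aemeasurable]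
  simp

lemma compProd_eq_bind (μ : Measure X) [IsProbabilityMeasure μ]
    (κ : Kernel X X) [IsMarkovKernel κ] :
    μ.bind (fun x => (κ x).map (fun y => (x, y))) = μ ⊗ₘ κ := by
  have hmeas : Measurable (fun x => (κ x).map (fun y => (x, y)) : X → Measure (X × X)) := by
    apply Measure.measurable_of_measurable_coe
    intro s hs
    have : ∀ x, ((κ x).map (fun y => (x, y))) s = κ x (Prod.mk x ⁻¹' s) := by
      intro x
      rw [Measure.map_apply measurable_prodMk_left hs]
    simp_rw [this]
    exact Kernel.measurable_kernel_prodMk_left hs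
  ext s hs
  rw [Measure.bind_apply hs hmeas.aemeasurable, Measure.compProd_apply hs]
  apply lintegral_congr
  intro x
  rw [Measure.map_apply measurable_prodMk_left hs]

/-- measurability of x ↦ ∫ h d(κ x) for h integrable wrt every κ x -/
lemma measurable_kint' (κ : Kernel X X) [IsMarkovKernel κ] {h : X → ℝ} (hm : Measurable h)
    (hint : ∀ x, Integrable h (κ x)) :
    Measurable (fun x => ∫ y, h y ∂(κ x)) := by
  have : ∀ x, ∫ y, h y ∂(κ x)
      = (∫⁻ y, ENNReal.ofReal (h y) ∂(κ x)).toReal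
        - (∫⁻ y, ENNReal.ofReal (-(h y)) ∂(κ x)).toReal := fun x =>
    integral_eq_lintegral_pos_part_sub_lintegral_neg_part (hint x)
  simp_rw [this]
  exact ((Measurable.lintegral_kernel hm.ennreal_ofReal).ennreal_toReal).sub
    ((Measurable.lintegral_kernel hm.neg.ennreal_ofReal).ennreal_toReal)

lemma geomSum_le {γr : ℝ} (h0 : 0 ≤ γr) (h1 : γr < 1) (m : ℕ) :
    ∑ k ∈ range m, γr ^ k ≤ 1 / (1 - γr) := by
  have hd : 0 < 1 - γr := by linarith
  rw [geom_sum_eq (by linarith : γr ≠ 1) m]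
  have heq : (γr ^ m - 1) / (γr - 1) = (1 - γr ^ m) / (1 - γr) := by
    rw [div_eq_div_iff (by linarith) (by linarith)]; ring
  rw [heq]
  have hpow : 0 ≤ γr ^ m := pow_nonneg h0 m
  gcongr
  linarith

lemma geom_tail {γr : ℝ} (h0 : 0 ≤ γr) (h1 : γr < 1) (i n : ℕ) :
    ∑ j ∈ Ico (i+1) n, γr ^ (j - i) ≤ γr / (1 - γr) := by
  rcases le_or_gt (i+1) n with h | h
  · rw [Finset.sum_Ico_eq_sum_range]
    have : ∀ k ∈ range (n - (i+1)), γr ^ (i + 1 + k - i) = γr * γr ^ k := by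
      intro k _
      have : i + 1 + k - i = k + 1 := by omega
      rw [this, pow_succ, mul_comm]
    rw [Finset.sum_congr rfl this, ← Finset.mul_sum]
    rw [div_eq_mul_one_div]
    exact mul_le_mul_of_nonneg_left (geomSum_le h0 h1 _) h0
  · rw [Finset.Ico_eq_empty (by omega), Finset.sum_empty]
    have : 0 < 1 - γr := by linarith
    positivity

lemma double_sum_le (n : ℕ) (B : ℕ → ℝ) (hB : ∀ m, 0 ≤ B m) (c γr : ℝ)
    (hc : 0 ≤ c) (h0 : 0 ≤ γr) (h1 : γr < 1) (C : ℕ → ℕ → ℝ)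
    (hdiag : ∀ i, C i i ≤ B i)
    (hoff : ∀ i j, i < j → C i j ≤ c * γr ^ (j - i) * B i)
    (hoff' : ∀ i j, j < i → C i j ≤ c * γr ^ (i - j) * B j) :
    ∑ i ∈ range n, ∑ j ∈ range n, C i j ≤
      (1 + 2 * c * γr / (1 - γr)) * ∑ i ∈ range n, B i := by
  have hsplit : ∀ i ∈ range n, ∑ j ∈ range n, C i j =
      (∑ j ∈ range i, C i j) + (C i i + ∑ j ∈ Ico (i+1) n, C i j) := by
    intro i hi
    rw [mem_range] at hi
    rw [range_eq_Ico, ← Finset.sum_Ico_consecutive _ (Nat.zero_le i) (le_of_lt hi),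
      Finset.sum_eq_sum_Ico_succ_bot hi, ← range_eq_Ico]
  rw [Finset.sum_congr rfl hsplit, Finset.sum_add_distrib, Finset.sum_add_distrib]
  have hgeom : ∀ i, ∑ j ∈ Ico (i+1) n, c * γr ^ (j - i) * B i ≤
      c * (γr / (1 - γr)) * B i := by
    intro i
    have : ∑ j ∈ Ico (i+1) n, c * γr ^ (j - i) * B i
        = c * (∑ j ∈ Ico (i+1) n, γr ^ (j - i)) * B i := by
      rw [Finset.mul_sum, Finset.sum_mul]
    rw [this]
    exact mul_le_mul_of_nonneg_right
      (mul_le_mul_of_nonneg_left (geom_tail h0 h1 i n) hc) (hB i)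
  have hT3 : ∑ i ∈ range n, ∑ j ∈ Ico (i+1) n, C i j ≤
      ∑ i ∈ range n, c * (γr / (1 - γr)) * B i := by
    apply Finset.sum_le_sum
    intro i _
    calc ∑ j ∈ Ico (i+1) n, C i j ≤ ∑ j ∈ Ico (i+1) n, c * γr ^ (j - i) * B i := by
          apply Finset.sum_le_sum
          intro j hj
          rw [mem_Ico] at hj
          exact hoff i j (by omega)
      _ ≤ c * (γr / (1 - γr)) * B i := hgeom i
  have hT1 : ∑ i ∈ range n, ∑ j ∈ range i, C i j ≤
      ∑ i ∈ range n, c * (γr / (1 - γr)) * B i := by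
    have step : ∑ i ∈ range n, ∑ j ∈ range i, C i j ≤
        ∑ i ∈ range n, ∑ j ∈ range i, c * γr ^ (i - j) * B j := by
      apply Finset.sum_le_sum; intro i _
      apply Finset.sum_le_sum; intro j hj
      rw [mem_range] at hj
      exact hoff' i j hj
    refine le_trans step ?_
    have comm := Finset.sum_Ico_Ico_comm' 0 n (fun i j => c * γr ^ (j - i) * B i)
    simp only [← range_eq_Ico] at comm
    rw [← comm]
    apply Finset.sum_le_sum
    intro i _
    exact hgeom i
  have hT2 : ∑ i ∈ range n, C i i ≤ ∑ i ∈ range n, B i :=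
    Finset.sum_le_sum fun i _ => hdiag i
  have hend : ∑ i ∈ range n, c * (γr / (1 - γr)) * B i
      = c * (γr / (1 - γr)) * ∑ i ∈ range n, B i := by rw [Finset.mul_sum]
  have hnn : (0:ℝ) ≤ ∑ i ∈ range n, B i := Finset.sum_nonneg fun i _ => hB i
  have hw : c * (γr / (1 - γr)) ≥ 0 := by
    have : 0 < 1 - γr := by linarith
    positivity
  calc _ ≤ (∑ i ∈ range n, c * (γr / (1 - γr)) * B i) +
        ((∑ i ∈ range n, B i) + ∑ i ∈ range n, c * (γr / (1 - γr)) * B i) := by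
        have := add_le_add hT1 (add_le_add hT2 hT3)
        exact this
    _ = (1 + 2 * c * γr / (1 - γr)) * ∑ i ∈ range n, B i := by
        rw [hend]; field_simp; ring
end Aux

section Main
open Finset
variable {X : Type*} [MeasurableSpace X]

/-- π is invariant under evolve -/
lemma evolve_pi (P : Kernel X X) [IsMarkovKernel P] (π : Measure X)
    (hinv : π.bind (fun x => P x) = π) (k : ℕ) : evolve P π k = π := by
  induction k with
  | zero => rfl
  | succ k ih =>
      show (kstep P)^[k+1] π = π
      rw [Function.iterate_succ_apply']
      show kstep P (evolve P π k) = π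
      rw [ih]
      exact hinv

lemma iterK_add (P : Kernel X X) [IsMarkovKernel P] (x₀ : X) (t i : ℕ) :
    iterK P (t + i) x₀ = (iterK P t x₀).bind (iterK P i) := by
  rw [← evolve_dirac, ← evolve_dirac]
  show (kstep P)^[t + i] (Measure.dirac x₀) = _
  rw [Nat.add_comm t i, Function.iterate_add_apply]
  exact evolve_eq_bind P _ i

end Main

/-- Corollary, MSE bound with burn-in: for a deterministic start at
x₀ and burn-in time t, MSE(Î_{t,n}) ≤
(Fc^{2/p}/n)(1 + 2M_rγ_r/(1-γ_r))(πV + M²γᵗV(x₀)/(n(1-γ))). -/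
theorem mse_bound_burnin {X : Type*} [MeasurableSpace X]
    (P : Kernel X X) [IsMarkovKernel P]
    (V : X → ℝ) (hVm : Measurable V) (hV1 : ∀ x, 1 ≤ V x)
    (π : Measure X) [IsProbabilityMeasure π]
    (hinv : π.bind (fun x => P x) = π) (hπV : Integrable V π)
    (M γ Mr γr : ℝ) (hM : 0 < M) (hγ0 : 0 < γ) (hγ1 : γ < 1)
    (hMr : 0 < Mr) (hγr0 : 0 < γr) (hγr1 : γr < 1)
    (p r : ℝ) (hp : 2 ≤ p) (hr₁ : p / (p - 1) ≤ r) (hr₂ : r ≤ p)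
    (hErgV : ∀ (x : X) (k : ℕ) (g : X → ℝ), Measurable g → (∀ y, |g y| ≤ V y) →
      |∫ y, g y ∂(evolve P (Measure.dirac x) k) - ∫ y, g y ∂π| ≤ M * γ ^ k * V x)
    (hErgVr : ∀ (x : X) (k : ℕ) (g : X → ℝ), Measurable g →
      (∀ y, |g y| ≤ (V y) ^ (1 / r)) →
      |∫ y, g y ∂(evolve P (Measure.dirac x) k) - ∫ y, g y ∂π| ≤
        Mr * γr ^ k * (V x) ^ (1 / r))
    (f : X → ℝ) (hfm : Measurable f) (hfi : Integrable f π)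
    (Fc : ℝ) (hFc : 0 ≤ Fc)
    (hfc : ∀ x, |f x - ∫ z, f z ∂π| ^ p ≤ Fc * V x)
    -- the Markov chain started deterministically at x₀
    (x₀ : X)
    {Ω : Type*} [MeasurableSpace Ω] (Pr : Measure Ω) [IsProbabilityMeasure Pr]
    (Xc : ℕ → Ω → X) (hXm : ∀ i, Measurable (Xc i))
    (hlaw : ∀ i, Measure.map (Xc i) Pr = evolve P (Measure.dirac x₀) i)
    (hjoint : ∀ i j, i ≤ j → Measure.map (fun ω => (Xc i ω, Xc j ω)) Pr =
      (evolve P (Measure.dirac x₀) i).bind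
        (fun x => (evolve P (Measure.dirac x) (j - i)).map (fun y => (x, y))))
    (t n : ℕ) (hn : 1 ≤ n) :
    ∫ ω, ((1 / (n : ℝ)) * ∑ i ∈ Finset.range n, f (Xc (t + i) ω) -
        ∫ z, f z ∂π) ^ 2 ∂Pr ≤
      (Fc ^ (2 / p) / n) * (1 + 2 * Mr * γr / (1 - γr)) *
        (∫ x, V x ∂π + M ^ 2 * γ ^ t * V x₀ / (n * (1 - γ))) := by
  classical
  have hp0 : (0:ℝ) < p := by linarith
  have hp1 : (0:ℝ) < p - 1 := by linarith
  have hr0 : (0:ℝ) < r := lt_of_lt_of_le (div_pos hp0 hp1) hr₁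
  have hγd : (0:ℝ) < 1 - γ := by linarith
  have hγrd : (0:ℝ) < 1 - γr := by linarith
  have hn0 : (0:ℝ) < (n:ℝ) := by exact_mod_cast hn
  have hV0 : ∀ y, (0:ℝ) < V y := fun y => lt_of_lt_of_le zero_lt_one (hV1 y)
  have hπV0 : (0:ℝ) ≤ ∫ x, V x ∂π := integral_nonneg fun x => (hV0 x).le
  set c : ℝ := ∫ z, f z ∂π with hc
  set fc : X → ℝ := fun y => f y - c with hfc_def
  have hfcm : Measurable fc := hfm.sub measurable_const
  have hπfc : ∫ y, fc y ∂π = 0 := by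
    rw [hfc_def]
    rw [integral_sub hfi (integrable_const c)]
    simp [hc]
  have hW0 : (0:ℝ) ≤ 1 + 2 * Mr * γr / (1 - γr) := by positivity
  -- pointwise rewriting of the average
  have hpt : ∀ ω, ((1 / (n : ℝ)) * ∑ i ∈ Finset.range n, f (Xc (t + i) ω) - c)
      = (1 / (n:ℝ)) * ∑ i ∈ Finset.range n, fc (Xc (t + i) ω) := by
    intro ω
    have : ∑ i ∈ Finset.range n, fc (Xc (t + i) ω)
        = (∑ i ∈ Finset.range n, f (Xc (t + i) ω)) - n * c := by
      rw [hfc_def]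
      rw [Finset.sum_sub_distrib, Finset.sum_const, Finset.card_range, nsmul_eq_mul]
    rw [this, mul_sub]
    congr 1
    field_simp
  clear_value fc c
  rcases eq_or_lt_of_le hFc with hFc0 | hFcpos
  · -- degenerate case Fc = 0
    have hfc0 : ∀ y, fc y = 0 := by
      intro y
      have h := hfc y
      rw [← hFc0, zero_mul] at h
      have h2 : (0:ℝ) ≤ |f y - c| ^ p := Real.rpow_nonneg (abs_nonneg _) p
      have h3 : |f y - c| ^ p = 0 := le_antisymm h h2
      have h4 := (Real.rpow_eq_zero (abs_nonneg _) (ne_of_gt hp0)).mp h3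
      rw [abs_eq_zero] at h4
      simpa [hfc_def] using h4
    have hL : ∫ ω, ((1 / (n : ℝ)) * ∑ i ∈ Finset.range n, f (Xc (t + i) ω) - c) ^ 2 ∂Pr
        = 0 := by
      have : ∀ ω, ((1 / (n : ℝ)) * ∑ i ∈ Finset.range n, f (Xc (t + i) ω) - c) ^ 2 = 0 := by
        intro ω
        rw [hpt ω]
        simp [hfc0]
      simp only [this]
      simp
    rw [hL]
    have : Fc ^ (2/p) = 0 := by
      rw [← hFc0]
      exact Real.zero_rpow (by positivity)
    rw [this]
    simp
  · -- main case : 0 < Fc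
    set q : ℝ := Fc ^ (1/p) with hq_def
    have hq : 0 < q := Real.rpow_pos_of_pos hFcpos _
    have hqq : q * q = Fc ^ (2/p) := by
      rw [hq_def, ← Real.rpow_add hFcpos]
      rw [show 1/p + 1/p = 2/p by ring]
    have hfcV : ∀ y, |fc y| ≤ q * (V y) ^ (1/p) := by
      intro y
      have h := hfc y
      have habs : (0:ℝ) ≤ |f y - c| := abs_nonneg _
      have h1 : |f y - c| = (|f y - c| ^ p) ^ (1/p) := by
        rw [← Real.rpow_mul habs, mul_one_div, div_self (ne_of_gt hp0), Real.rpow_one]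
      have h2 : (|f y - c| ^ p) ^ (1/p) ≤ (Fc * V y) ^ (1/p) :=
        Real.rpow_le_rpow (Real.rpow_nonneg habs _) h (by positivity)
      rw [Real.mul_rpow hFc (hV0 y).le] at h2
      simp only [hfc_def]
      rw [h1]
      exact h2
    have hVpr : ∀ y, (V y) ^ (1/p) ≤ (V y) ^ (1/r) := by
      intro y
      exact Real.rpow_le_rpow_of_exponent_le (hV1 y) (by
        rw [div_le_div_iff₀ hp0 hr0]
        nlinarith [(div_le_iff₀ hp1).mp hr₁])
    have hVp1 : ∀ y, (V y) ^ (1/p) ≤ V y := by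
      intro y
      have := Real.rpow_le_rpow_of_exponent_le (hV1 y)
        (show 1/p ≤ 1 by rw [div_le_one hp0]; linarith)
      rwa [Real.rpow_one] at this
    have hexp : 1/p + 1/r ≤ 1 := by
      have h1 : 1/r ≤ (p-1)/p := by
        rw [div_le_div_iff₀ hr0 hp0]
        nlinarith [(div_le_iff₀ hp1).mp hr₁]
      have h2 : 1/p + (p-1)/p = 1 := by field_simp; ring
      linarith
    have hVpp : ∀ y, (V y) ^ (1/p) * (V y) ^ (1/r) ≤ V y := by
      intro y
      rw [← Real.rpow_add (hV0 y)]
      have := Real.rpow_le_rpow_of_exponent_le (hV1 y) hexp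
      rwa [Real.rpow_one] at this
    have hfcsq : ∀ y, fc y ^ 2 ≤ Fc ^ (2/p) * V y := by
      intro y
      have h1 : |fc y| * |fc y| ≤ (q * (V y) ^ (1/p)) * (q * (V y) ^ (1/p)) :=
        mul_le_mul (hfcV y) (hfcV y) (abs_nonneg _)
          (mul_nonneg hq.le (Real.rpow_nonneg (hV0 y).le _))
      have h2 : (q * (V y) ^ (1/p)) * (q * (V y) ^ (1/p))
          = Fc ^ (2/p) * ((V y) ^ (1/p) * (V y) ^ (1/p)) := by
        rw [← hqq]; ring
      have h3 : (V y) ^ (1/p) * (V y) ^ (1/p) ≤ V y :=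
        le_trans (mul_le_mul_of_nonneg_left (hVpr y) (Real.rpow_nonneg (hV0 y).le _)) (hVpp y)
      calc fc y ^ 2 = |fc y| * |fc y| := by rw [abs_mul_abs_self, sq]
        _ ≤ Fc ^ (2/p) * ((V y) ^ (1/p) * (V y) ^ (1/p)) := by rw [← h2]; exact h1
        _ ≤ Fc ^ (2/p) * V y := by
            exact mul_le_mul_of_nonneg_left h3 (by positivity)
    -- kernel facts
    have hEvD : ∀ (x : X) (k : ℕ), evolve P (Measure.dirac x) k = iterK P k x :=
      fun x k => evolve_dirac P x k
    have hVker : ∀ (x : X) (k : ℕ), Integrable V (iterK P k x) ∧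
        ∫ y, V y ∂(iterK P k x) ≤ (∫ y, V y ∂π) + M * γ ^ k * V x := by
      intro x k
      apply integrable_of_trunc hVm hV1
      intro K
      have hgm : Measurable (fun y => min (V y) (K:ℝ)) := hVm.min measurable_const
      have hg0 : ∀ y : X, 0 ≤ min (V y) (K:ℝ) := fun y =>
        le_min (hV0 y).le (Nat.cast_nonneg K)
      have hgb : ∀ y, |min (V y) (K:ℝ)| ≤ V y := fun y => by
        rw [abs_of_nonneg (hg0 y)]; exact min_le_left _ _
      have h := hErgV x k _ hgm hgb
      rw [hEvD] at h
      have htri : Integrable (fun y => min (V y) (K:ℝ)) π :=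
        hπV.mono' hgm.aestronglyMeasurable
          (Filter.Eventually.of_forall fun y => by rw [Real.norm_eq_abs]; exact hgb y)
      have h2 : ∫ y, min (V y) (K:ℝ) ∂π ≤ ∫ y, V y ∂π :=
        integral_mono htri hπV fun y => min_le_left _ _
      have h3 := (abs_le.mp h).2
      linarith
    -- two-stage bound for the chain started at x₀
    have hVx₀ : ∀ i : ℕ, Integrable V (iterK P (t+i) x₀) ∧
        ∫ y, V y ∂(iterK P (t+i) x₀) ≤ (∫ y, V y ∂π) + M^2 * γ^(t+i) * V x₀ := by
      intro i
      apply integrable_of_trunc hVm hV1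
      intro K
      have hgm : Measurable (fun y => min (V y) (K:ℝ)) := hVm.min measurable_const
      have hg0 : ∀ y : X, 0 ≤ min (V y) (K:ℝ) := fun y =>
        le_min (hV0 y).le (Nat.cast_nonneg K)
      have hgK : ∀ y : X, min (V y) (K:ℝ) ≤ (K:ℝ) := fun y => min_le_right _ _
      have hgb : ∀ y, |min (V y) (K:ℝ)| ≤ V y := fun y => by
        rw [abs_of_nonneg (hg0 y)]; exact min_le_left _ _
      set h : X → ℝ := fun x => (∫ y, min (V y) (K:ℝ) ∂(iterK P i x))
        - ∫ y, min (V y) (K:ℝ) ∂π with hh_def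
      have hhm : Measurable h := (measurable_kint (iterK P i) hgm hg0).sub measurable_const
      have hhb : ∀ x, |h x| ≤ M * γ^i * V x := by
        intro x
        have := hErgV x i _ hgm hgb
        rw [hEvD] at this
        exact this
      have hMγ : (0:ℝ) < M * γ^i := by positivity
      have hg'm : Measurable (fun x => (M * γ^i)⁻¹ * h x) := hhm.const_mul _
      have hg'b : ∀ x, |(M * γ^i)⁻¹ * h x| ≤ V x := by
        intro x
        rw [abs_mul, abs_of_nonneg (inv_nonneg.mpr hMγ.le)]
        rw [inv_mul_le_iff₀ hMγ]
        exact hhb x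
      have herg := hErgV x₀ t _ hg'm hg'b
      rw [hEvD] at herg
      rw [integral_const_mul, integral_const_mul] at herg
      -- compute ∫ h dπ = 0
      have hbb : ∀ (ν : Measure X) (hν : IsProbabilityMeasure ν),
          Integrable (fun x => ∫ y, min (V y) (K:ℝ) ∂(iterK P i x)) ν := by
        intro ν hν
        refine (integrable_const (K:ℝ)).mono'
          ((measurable_kint (iterK P i) hgm hg0).aestronglyMeasurable) ?_
        refine Filter.Eventually.of_forall fun x => ?_
        rw [Real.norm_eq_abs, abs_of_nonneg (integral_nonneg hg0)]
        calc ∫ y, min (V y) (K:ℝ) ∂(iterK P i x) ≤ ∫ _, (K:ℝ) ∂(iterK P i x) :=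
              integral_mono ((integrable_const (K:ℝ)).mono'
                (hgm.aestronglyMeasurable)
                (Filter.Eventually.of_forall fun y => by
                  rw [Real.norm_eq_abs, abs_of_nonneg (hg0 y)]; exact hgK y))
                (integrable_const _) hgK
          _ = (K:ℝ) := by simp
      have hππ : ∫ x, h x ∂π = 0 := by
        rw [hh_def]
        rw [integral_sub (hbb π inferInstance) (integrable_const _)]
        rw [integral_const]
        simp only [probReal_univ, one_smul]
        rw [← integral_bind_bounded π (iterK P i) hgm hg0 hgK]
        have : π.bind ⇑(iterK P i) = π := by
          rw [← evolve_eq_bind]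
          exact evolve_pi P π hinv i
        rw [this]
        ring
      have hμt : ∫ x, h x ∂(iterK P t x₀) =
          (∫ y, min (V y) (K:ℝ) ∂(iterK P (t+i) x₀)) - ∫ y, min (V y) (K:ℝ) ∂π := by
        rw [hh_def]
        rw [integral_sub (hbb _ inferInstance) (integrable_const _)]
        rw [integral_const]
        simp only [probReal_univ, one_smul]
        rw [← integral_bind_bounded (iterK P t x₀) (iterK P i) hgm hg0 hgK]
        rw [← iterK_add]
      rw [hππ, mul_zero, sub_zero] at herg
      have habs2 : |∫ x, h x ∂(iterK P t x₀)| ≤ M^2 * γ^(t+i) * V x₀ := by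
        have h5 : |(M * γ^i)⁻¹| * |∫ x, h x ∂(iterK P t x₀)| ≤ M * γ^t * V x₀ := by
          rw [← abs_mul]; exact herg
        rw [abs_of_nonneg (inv_nonneg.mpr hMγ.le)] at h5
        rw [inv_mul_le_iff₀ hMγ] at h5
        calc |∫ x, h x ∂(iterK P t x₀)| ≤ M * γ^i * (M * γ^t * V x₀) := h5
          _ = M^2 * γ^(t+i) * V x₀ := by rw [pow_add]; ring
      rw [hμt] at habs2
      have h6 := (abs_le.mp habs2).2
      have htri : Integrable (fun y => min (V y) (K:ℝ)) π :=
        hπV.mono' hgm.aestronglyMeasurable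
          (Filter.Eventually.of_forall fun y => by rw [Real.norm_eq_abs]; exact hgb y)
      have h2 : ∫ y, min (V y) (K:ℝ) ∂π ≤ ∫ y, V y ∂π :=
        integral_mono htri hπV fun y => min_le_left _ _
      linarith
    -- fc integrable over kernel measures; the conditional-expectation bound
    have hfcint : ∀ (x : X) (k : ℕ), Integrable fc (iterK P k x) := by
      intro x k
      refine ((hVker x k).1.const_mul q).mono' hfcm.aestronglyMeasurable ?_
      refine Filter.Eventually.of_forall fun y => ?_
      rw [Real.norm_eq_abs]
      calc |fc y| ≤ q * (V y) ^ (1/p) := hfcV y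
        _ ≤ q * V y := mul_le_mul_of_nonneg_left (hVp1 y) hq.le
    have hImeas : ∀ k : ℕ, Measurable (fun x => ∫ y, fc y ∂(iterK P k x)) :=
      fun k => measurable_kint' (iterK P k) hfcm (fun x => hfcint x k)
    have hI : ∀ (x : X) (k : ℕ),
        |∫ y, fc y ∂(iterK P k x)| ≤ q * (Mr * γr^k * (V x) ^ (1/r)) := by
      intro x k
      have hgm : Measurable (fun y => q⁻¹ * fc y) := hfcm.const_mul _
      have hgb : ∀ y, |q⁻¹ * fc y| ≤ (V y) ^ (1/r) := by
        intro y
        rw [abs_mul, abs_of_nonneg (inv_nonneg.mpr hq.le)]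
        calc q⁻¹ * |fc y| ≤ q⁻¹ * (q * (V y) ^ (1/p)) :=
              mul_le_mul_of_nonneg_left (hfcV y) (inv_nonneg.mpr hq.le)
          _ = (V y) ^ (1/p) := by field_simp
          _ ≤ (V y) ^ (1/r) := hVpr y
      have h := hErgVr x k _ hgm hgb
      rw [hEvD] at h
      rw [integral_const_mul, integral_const_mul, hπfc, mul_zero, sub_zero] at h
      rw [abs_mul, abs_of_nonneg (inv_nonneg.mpr hq.le), inv_mul_le_iff₀ hq] at h
      exact h
    -- Ω side
    have hlaw' : ∀ m : ℕ, Measure.map (Xc m) Pr = iterK P m x₀ := by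
      intro m; rw [hlaw m, hEvD]
    have hVXint : ∀ m : ℕ, Integrable (fun ω => V (Xc m ω)) Pr := by
      intro m
      have h := (hVker x₀ m).1
      rw [← hlaw'] at h
      have := (integrable_map_measure hVm.aestronglyMeasurable (hXm m).aemeasurable).mp h
      exact this
    have hprod_int : ∀ a b : ℕ, Integrable (fun ω => fc (Xc a ω) * fc (Xc b ω)) Pr := by
      intro a b
      refine (((hVXint a).add (hVXint b)).const_mul (Fc ^ (2/p) / 2)).mono'
        (((hfcm.comp (hXm a)).mul (hfcm.comp (hXm b))).aestronglyMeasurable) ?_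
      refine Filter.Eventually.of_forall fun ω => ?_
      rw [Real.norm_eq_abs, abs_mul]
      have h1 := hfcsq (Xc a ω)
      have h2 := hfcsq (Xc b ω)
      have h3 := two_mul_le_add_sq |fc (Xc a ω)| |fc (Xc b ω)|
      rw [sq_abs, sq_abs] at h3
      simp only [Pi.add_apply]
      calc |fc (Xc a ω)| * |fc (Xc b ω)|
          ≤ (fc (Xc a ω) ^ 2 + fc (Xc b ω) ^ 2) / 2 := by linarith
        _ ≤ (Fc ^ (2/p) * V (Xc a ω) + Fc ^ (2/p) * V (Xc b ω)) / 2 := by linarith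
        _ = Fc ^ (2/p) / 2 * (V (Xc a ω) + V (Xc b ω)) := by ring
    -- diagonal bound
    have hdiag : ∀ i : ℕ, ∫ ω, fc (Xc (t+i) ω) * fc (Xc (t+i) ω) ∂Pr ≤
        Fc ^ (2/p) * ((∫ y, V y ∂π) + M^2*γ^(t+i)*V x₀) := by
      intro i
      have e1 : ∫ ω, fc (Xc (t+i) ω) * fc (Xc (t+i) ω) ∂Pr
          = ∫ x, fc x ^ 2 ∂(iterK P (t+i) x₀) := by
        rw [← hlaw' (t+i)]
        rw [integral_map (hXm _).aemeasurable ((hfcm.pow_const 2).aestronglyMeasurable)]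
        congr 1
        funext ω
        rw [sq]
      rw [e1]
      calc ∫ x, fc x ^ 2 ∂(iterK P (t+i) x₀)
          ≤ ∫ x, Fc ^ (2/p) * V x ∂(iterK P (t+i) x₀) :=
            integral_mono_of_nonneg (Filter.Eventually.of_forall fun x => sq_nonneg _)
              ((hVx₀ i).1.const_mul _)
              (Filter.Eventually.of_forall fun x => hfcsq x)
        _ = Fc ^ (2/p) * ∫ x, V x ∂(iterK P (t+i) x₀) := integral_const_mul _ _
        _ ≤ _ := mul_le_mul_of_nonneg_left (hVx₀ i).2 (by positivity)
    -- cross bound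
    have hcross : ∀ i j : ℕ, i < j → ∫ ω, fc (Xc (t+i) ω) * fc (Xc (t+j) ω) ∂Pr ≤
        Mr * γr^(j-i) * (Fc ^ (2/p) * ((∫ y, V y ∂π) + M^2*γ^(t+i)*V x₀)) := by
      intro i j hij
      set k := j - i with hk
      set ν := iterK P (t+i) x₀ with hν_def
      have hjj : Measure.map (fun ω => (Xc (t+i) ω, Xc (t+j) ω)) Pr
          = ν ⊗ₘ iterK P k := by
        have h := hjoint (t+i) (t+j) (by omega)
        simp only [hEvD] at h
        have hsub : t + j - (t + i) = k := by omega
        rw [hsub] at h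
        rw [h]
        exact compProd_eq_bind ν (iterK P k)
      have hFm : Measurable (fun z : X × X => fc z.1 * fc z.2) :=
        (hfcm.comp measurable_fst).mul (hfcm.comp measurable_snd)
      have hpair : Measurable (fun ω => (Xc (t+i) ω, Xc (t+j) ω)) :=
        (hXm _).prodMk (hXm _)
      have hFint : Integrable (fun z : X × X => fc z.1 * fc z.2) (ν ⊗ₘ iterK P k) := by
        rw [← hjj]
        refine (integrable_map_measure hFm.aestronglyMeasurable hpair.aemeasurable).mpr ?_
        exact hprod_int (t+i) (t+j)
      have e1 : ∫ ω, fc (Xc (t+i) ω) * fc (Xc (t+j) ω) ∂Pr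
          = ∫ z, fc z.1 * fc z.2 ∂(ν ⊗ₘ iterK P k) := by
        rw [← hjj, integral_map hpair.aemeasurable hFm.aestronglyMeasurable]
      rw [e1, Measure.integral_compProd hFint]
      have e2 : ∀ x, ∫ y, fc x * fc y ∂(iterK P k x)
          = fc x * ∫ y, fc y ∂(iterK P k x) := fun x => integral_const_mul _ _
      simp_rw [e2]
      have hbnd' : ∀ x, |fc x * (∫ y, fc y ∂(iterK P k x))|
          ≤ Mr * γr^k * Fc^(2/p) * V x := by
        intro x
        calc |fc x * (∫ y, fc y ∂(iterK P k x))|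
            = |fc x| * |∫ y, fc y ∂(iterK P k x)| := abs_mul _ _
          _ ≤ (q * (V x)^(1/p)) * (q * (Mr * γr^k * (V x)^(1/r))) :=
              mul_le_mul (hfcV x) (hI x k) (abs_nonneg _)
                (mul_nonneg hq.le (Real.rpow_nonneg (hV0 x).le _))
          _ = Mr * γr^k * Fc^(2/p) * ((V x)^(1/p) * (V x)^(1/r)) := by
              rw [← hqq]; ring
          _ ≤ Mr * γr^k * Fc^(2/p) * V x := by
              refine mul_le_mul_of_nonneg_left (hVpp x) ?_
              positivity
      have hint1 : Integrable (fun x => fc x * ∫ y, fc y ∂(iterK P k x)) ν :=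
        ((hVx₀ i).1.const_mul (Mr * γr^k * Fc^(2/p))).mono'
          ((hfcm.mul (hImeas k)).aestronglyMeasurable)
          (Filter.Eventually.of_forall fun x => by
            rw [Real.norm_eq_abs]; exact hbnd' x)
      calc ∫ x, fc x * ∫ y, fc y ∂(iterK P k x) ∂ν
          ≤ ∫ x, Mr * γr^k * Fc^(2/p) * V x ∂ν :=
            integral_mono hint1 ((hVx₀ i).1.const_mul _)
              (fun x => (le_abs_self _).trans (hbnd' x))
        _ = Mr * γr^k * Fc^(2/p) * ∫ x, V x ∂ν := integral_const_mul _ _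
        _ ≤ Mr * γr^k * (Fc^(2/p) * ((∫ y, V y ∂π) + M^2*γ^(t+i)*V x₀)) := by
            rw [mul_assoc]
            refine mul_le_mul_of_nonneg_left ?_ (by positivity)
            exact mul_le_mul_of_nonneg_left (hVx₀ i).2 (by positivity)
    -- assemble
    have hA0 : ∀ i : ℕ, (0:ℝ) ≤ Fc ^ (2/p) * ((∫ y, V y ∂π) + M^2*γ^(t+i)*V x₀) := by
      intro i
      refine mul_nonneg (Real.rpow_nonneg hFc _) ?_
      refine add_nonneg hπV0 (mul_nonneg (by positivity) (hV0 x₀).le)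
    have hsum := double_sum_le n
      (fun i => Fc ^ (2/p) * ((∫ y, V y ∂π) + M^2*γ^(t+i)*V x₀)) hA0 Mr γr
      hMr.le hγr0.le hγr1
      (fun i j => ∫ ω, fc (Xc (t+i) ω) * fc (Xc (t+j) ω) ∂Pr)
      (fun i => hdiag i)
      (fun i j hij => hcross i j hij)
      (fun i j hij => by
        show ∫ ω, fc (Xc (t+i) ω) * fc (Xc (t+j) ω) ∂Pr
            ≤ Mr * γr ^ (i - j) * (Fc ^ (2/p) * ((∫ y, V y ∂π) + M^2*γ^(t+j)*V x₀))
        have e : ∫ ω, fc (Xc (t+i) ω) * fc (Xc (t+j) ω) ∂Pr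
            = ∫ ω, fc (Xc (t+j) ω) * fc (Xc (t+i) ω) ∂Pr := by
          congr 1
          funext ω
          ring
        rw [e]
        exact hcross j i hij)
    have hBsum : ∑ i ∈ Finset.range n, (Fc ^ (2/p) * ((∫ y, V y ∂π) + M^2*γ^(t+i)*V x₀))
        ≤ Fc ^ (2/p) * ((n:ℝ) * (∫ y, V y ∂π) + M^2*γ^t*V x₀ / (1-γ)) := by
      have e : ∀ i : ℕ, Fc ^ (2/p) * ((∫ y, V y ∂π) + M^2*γ^(t+i)*V x₀)
          = Fc ^ (2/p) * (∫ y, V y ∂π) + (Fc ^ (2/p) * (M^2*γ^t*V x₀)) * γ^i := by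
        intro i
        rw [pow_add]
        ring
      simp only [e]
      rw [Finset.sum_add_distrib, Finset.sum_const, Finset.card_range, nsmul_eq_mul,
        ← Finset.mul_sum]
      have hg := geomSum_le hγ0.le hγ1 n
      have hc0 : (0:ℝ) ≤ Fc ^ (2/p) * (M^2*γ^t*V x₀) :=
        mul_nonneg (Real.rpow_nonneg hFc _) (mul_nonneg (by positivity) (hV0 x₀).le)
      have h2 := mul_le_mul_of_nonneg_left hg hc0
      have e2 : Fc ^ (2/p) * ((n:ℝ) * (∫ y, V y ∂π) + M^2*γ^t*V x₀ / (1-γ))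
          = (n:ℝ) * (Fc ^ (2/p) * (∫ y, V y ∂π))
            + (Fc ^ (2/p) * (M^2*γ^t*V x₀)) * (1/(1-γ)) := by
        field_simp
      rw [e2]
      linarith
    have hsum_int : ∀ i ∈ Finset.range n, Integrable
        (fun ω => ∑ j ∈ Finset.range n, fc (Xc (t+i) ω) * fc (Xc (t+j) ω)) Pr := by
      intro i _
      exact integrable_finset_sum _ (fun j _ => hprod_int (t+i) (t+j))
    have hexp2 : ∀ ω : Ω, ((1 / (n:ℝ)) * ∑ i ∈ Finset.range n, f (Xc (t + i) ω) - c) ^ 2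
        = (1/(n:ℝ))^2 * ∑ i ∈ Finset.range n, ∑ j ∈ Finset.range n,
            fc (Xc (t+i) ω) * fc (Xc (t+j) ω) := by
      intro ω
      rw [hpt ω, mul_pow, sq (∑ i ∈ Finset.range n, fc (Xc (t + i) ω)),
        Finset.sum_mul_sum]
    calc ∫ ω, ((1 / (n : ℝ)) * ∑ i ∈ Finset.range n, f (Xc (t + i) ω) - c) ^ 2 ∂Pr
        = (1/(n:ℝ))^2 * ∫ ω, ∑ i ∈ Finset.range n, ∑ j ∈ Finset.range n,
            fc (Xc (t+i) ω) * fc (Xc (t+j) ω) ∂Pr := by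
          simp_rw [hexp2]
          rw [integral_const_mul]
      _ = (1/(n:ℝ))^2 * ∑ i ∈ Finset.range n, ∑ j ∈ Finset.range n,
            ∫ ω, fc (Xc (t+i) ω) * fc (Xc (t+j) ω) ∂Pr := by
          rw [integral_finset_sum _ hsum_int]
          congr 1
          refine Finset.sum_congr rfl fun i hi => ?_
          rw [integral_finset_sum _ (fun j _ => hprod_int (t+i) (t+j))]
      _ ≤ (1/(n:ℝ))^2 * ((1 + 2*Mr*γr/(1-γr)) * ∑ i ∈ Finset.range n,
            (Fc ^ (2/p) * ((∫ y, V y ∂π) + M^2*γ^(t+i)*V x₀))) :=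
          mul_le_mul_of_nonneg_left hsum (by positivity)
      _ ≤ (1/(n:ℝ))^2 * ((1 + 2*Mr*γr/(1-γr)) * (Fc ^ (2/p) *
            ((n:ℝ) * (∫ y, V y ∂π) + M^2*γ^t*V x₀ / (1-γ)))) :=
          mul_le_mul_of_nonneg_left (mul_le_mul_of_nonneg_left hBsum hW0) (by positivity)
      _ = (Fc ^ (2 / p) / n) * (1 + 2 * Mr * γr / (1 - γr)) *
            ((∫ x, V x ∂π) + M ^ 2 * γ ^ t * V x₀ / (n * (1 - γ))) := by
          field_simp
end

section
/- (Median trick) Let m be an odd positive integer and Î₁, …, Î_m independent real random variables satisfying P(|Î_k − I| ≤ ε) ≥ 1 − a for each k, where a < 1/2. Let Î := median{Î₁, …, Î_m}. Then P(|Î − I| ≤ ε) ≥ 1 − α whenever m ≥ 2 ln(2α) / ln(4a(1−a)). -/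
open MeasureTheory ProbabilityTheory Finset
open scoped ENNReal

/-- The median of m real numbers: the ((m+1)/2)-th order statistic,
i.e. the entry at index (m-1)/2 of the sorted list. -/
noncomputable def medianFin (m : ℕ) (v : Fin m → ℝ) : ℝ :=
  ((Multiset.map v (Finset.univ : Finset (Fin m)).val).sort (· ≤ ·)).getD
    ((m - 1) / 2) 0


lemma sorted_getD_le_of_countP (l : List ℝ) (hl : l.Pairwise (· ≤ ·)) (j : ℕ) (hj : j < l.length)
    (c : ℝ) (h : j + 1 ≤ l.countP (fun x => decide (x ≤ c))) : l.getD j 0 ≤ c := by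
  by_contra hc
  push_neg at hc
  rw [List.getD_eq_getElem l 0 hj] at hc
  have hsplit : l = l.take j ++ l.drop j := (List.take_append_drop j l).symm
  have hdrop : (l.drop j).countP (fun x => decide (x ≤ c)) = 0 := by
    rw [List.countP_eq_zero]
    intro x hx
    obtain ⟨i, hi, hix⟩ := List.mem_iff_getElem.1 hx
    have hlen : i < l.length - j := by simpa [List.length_drop] using hi
    have hji : j + i < l.length := by omega
    rw [List.getElem_drop] at hix
    have hle : l[j]'hj ≤ l[j + i]'hji := by
      rcases Nat.eq_zero_or_pos i with rfl | hi0
      · simp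
      · exact List.pairwise_iff_getElem.1 hl j (j+i) hj hji (by omega)
    rw [hix] at hle
    intro hxc
    rw [decide_eq_true_eq] at hxc
    linarith
  have hcount : l.countP (fun x => decide (x ≤ c)) ≤ j := by
    conv_lhs => rw [hsplit]
    rw [List.countP_append, hdrop]
    have := List.countP_le_length (l := l.take j) (p := fun x => decide (x ≤ c))
    simpa [List.length_take] using this.trans (by simp [List.length_take])
  omega

lemma le_sorted_getD_of_countP (l : List ℝ) (hl : l.Pairwise (· ≤ ·)) (j : ℕ) (hj : j < l.length)
    (c : ℝ) (h : l.length - j ≤ l.countP (fun x => decide (c ≤ x))) : c ≤ l.getD j 0 := by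
  by_contra hc
  push_neg at hc
  rw [List.getD_eq_getElem l 0 hj] at hc
  have htake : (l.take (j+1)).countP (fun x => decide (c ≤ x)) = 0 := by
    rw [List.countP_eq_zero]
    intro x hx
    obtain ⟨i, hi, hix⟩ := List.mem_iff_getElem.1 hx
    have hilt : i < j + 1 := by
      have := hi; rw [List.length_take] at this; omega
    have hil : i < l.length := by omega
    rw [List.getElem_take] at hix
    have hle : l[i]'hil ≤ l[j]'hj := by
      rcases Nat.lt_or_ge i j with hij | hij
      · exact List.pairwise_iff_getElem.1 hl i j hil hj hij
      · have hij' : i = j := by omega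
        subst hij'; exact le_refl _
    rw [hix] at hle
    intro hxc
    rw [decide_eq_true_eq] at hxc
    linarith
  have hsplit : l = l.take (j+1) ++ l.drop (j+1) := (List.take_append_drop (j+1) l).symm
  have hcount : l.countP (fun x => decide (c ≤ x)) ≤ l.length - (j+1) := by
    conv_lhs => rw [hsplit]
    rw [List.countP_append, htake, Nat.zero_add]
    have := List.countP_le_length (l := l.drop (j+1)) (p := fun x => decide (c ≤ x))
    simpa [List.length_drop] using this
  omega



noncomputable def binomTail (a : ℝ) : ℕ → ℕ → ℝ
  | _, 0 => 1
  | 0, _+1 => 0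
  | n+1, j+1 => a * binomTail a n j + (1 - a) * binomTail a n (j+1)

@[simp] lemma binomTail_zero (a : ℝ) (n : ℕ) : binomTail a n 0 = 1 := by
  cases n <;> rfl

@[simp] lemma binomTail_zero_succ (a : ℝ) (j : ℕ) : binomTail a 0 (j+1) = 0 := rfl

lemma binomTail_succ_succ (a : ℝ) (n j : ℕ) :
    binomTail a (n+1) (j+1) = a * binomTail a n j + (1 - a) * binomTail a n (j+1) := rfl

lemma binomTail_nonneg {a : ℝ} (h0 : 0 ≤ a) (h1 : a ≤ 1) (n j : ℕ) :
    0 ≤ binomTail a n j := by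
  induction n generalizing j with
  | zero => cases j <;> simp
  | succ n ih =>
    cases j with
    | zero => simp
    | succ j =>
      rw [binomTail_succ_succ]
      have := ih j; have := ih (j+1)
      nlinarith

lemma binomTail_le_one {a : ℝ} (h0 : 0 ≤ a) (h1 : a ≤ 1) (n j : ℕ) :
    binomTail a n j ≤ 1 := by
  induction n generalizing j with
  | zero => cases j <;> simp
  | succ n ih =>
    cases j with
    | zero => simp
    | succ j =>
      rw [binomTail_succ_succ]
      have := ih j; have := ih (j+1)
      nlinarith

lemma binomTail_anti {a : ℝ} (h0 : 0 ≤ a) (h1 : a ≤ 1) (n j : ℕ) :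
    binomTail a n (j+1) ≤ binomTail a n j := by
  induction n generalizing j with
  | zero => cases j <;> simp
  | succ n ih =>
    cases j with
    | zero => simpa using binomTail_le_one h0 h1 (n+1) 1
    | succ j =>
      rw [binomTail_succ_succ, binomTail_succ_succ]
      have h1' := ih j; have h2' := ih (j+1)
      nlinarith

/-- Pascal identity for partial sums of binomial coefficients. -/
lemma cs_succ (n j : ℕ) :
    ∑ i ∈ Icc (j+1) (n+1), (n+1).choose i
      = (∑ i ∈ Icc j n, n.choose i) + ∑ i ∈ Icc (j+1) n, n.choose i := by
  rcases le_or_gt j n with hj | hj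
  · have h1 : Icc (j+1) (n+1) = (Icc j n).map (addRightEmbedding 1) := by
      rw [Finset.map_add_right_Icc]
    rw [h1, Finset.sum_map]
    simp only [addRightEmbedding_apply]
    have : ∀ i ∈ Icc j n, (n+1).choose (i+1) = n.choose i + n.choose (i+1) := by
      intro i _; rw [Nat.choose_succ_succ]
    rw [Finset.sum_congr rfl this, Finset.sum_add_distrib]
    congr 1
    have h2 : Icc (j+1) (n+1) = (Icc j n).map (addRightEmbedding 1) := h1
    have : ∑ i ∈ Icc j n, n.choose (i+1) = ∑ i ∈ Icc (j+1) (n+1), n.choose i := by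
      rw [h2, Finset.sum_map]; simp
    rw [this, ← Finset.Ico_add_one_right_eq_Icc, Finset.sum_Ico_succ_top (by omega), Nat.choose_succ_self,
      Finset.Ico_add_one_right_eq_Icc, Nat.add_zero]
  · rw [Icc_eq_empty (by omega), Icc_eq_empty (by omega), Icc_eq_empty (by omega)]
    simp

lemma binomTail_le {a : ℝ} (h0 : 0 ≤ a) (h1 : a ≤ 1 - a) (n j : ℕ) :
    binomTail a n j ≤ (∑ i ∈ Icc j n, (n.choose i : ℝ)) * a^j * (1-a)^(n-j) := by
  induction n generalizing j with
  | zero =>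
    cases j with
    | zero => simp
    | succ j => simp
  | succ n ih =>
    cases j with
    | zero =>
      have hsum : ∑ i ∈ Icc 0 (n+1), ((n+1).choose i : ℝ) = 2^(n+1) := by
        rw [← Nat.cast_sum]
        norm_cast
        rw [← Finset.Ico_add_one_right_eq_Icc, Nat.Ico_zero_eq_range, Nat.sum_range_choose]
      rw [binomTail_zero, hsum]
      have h2 : (1:ℝ) ≤ 2 * (1 - a) := by linarith
      calc (1:ℝ) = 1^(n+1) := (one_pow _).symm
        _ ≤ (2*(1-a))^(n+1) := pow_le_pow_left₀ (by norm_num) h2 _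
        _ = 2^(n+1) * (1-a)^(n+1) := mul_pow 2 (1-a) (n+1)
        _ = 2^(n+1) * a^0 * (1-a)^(n+1-0) := by simp
    | succ j =>
      rw [binomTail_succ_succ]
      have hx := ih j
      have hy := ih (j+1)
      have ha1 : (0:ℝ) ≤ 1 - a := by linarith
      have key : a * ((∑ i ∈ Icc j n, (n.choose i : ℝ)) * a^j * (1-a)^(n-j))
          + (1-a) * ((∑ i ∈ Icc (j+1) n, (n.choose i : ℝ)) * a^(j+1) * (1-a)^(n-(j+1)))
          = (∑ i ∈ Icc (j+1) (n+1), ((n+1).choose i : ℝ)) * a^(j+1) * (1-a)^(n+1-(j+1)) := by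
        have hcs := cs_succ n j
        have hcsR : (∑ i ∈ Icc (j+1) (n+1), ((n+1).choose i : ℝ))
            = (∑ i ∈ Icc j n, (n.choose i : ℝ)) + ∑ i ∈ Icc (j+1) n, (n.choose i : ℝ) := by
          rw [← Nat.cast_sum, ← Nat.cast_sum, ← Nat.cast_sum, ← Nat.cast_add, hcs]
        rw [hcsR]
        rcases le_or_gt (j+1) n with hjn | hjn
        · have e1 : n - (j+1) + 1 = n - j := by omega
          have e2 : n + 1 - (j+1) = n - j := by omega
          rw [e2, ← e1]
          ring
        · have e0 : Icc (j+1) n = ∅ := Icc_eq_empty (by omega)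
          rw [e0]
          simp only [Finset.sum_empty, zero_mul, mul_zero, add_zero]
          have e2 : n + 1 - (j+1) = n - j := by omega
          rw [e2]
          ring
      rw [← key]
      have hbx := binomTail_nonneg h0 (by linarith) n j
      have hby := binomTail_nonneg h0 (by linarith) n (j+1)
      have := mul_le_mul_of_nonneg_left hx h0
      have := mul_le_mul_of_nonneg_left hy ha1
      linarith

/-- halfway sum -/
lemma cs_half (n : ℕ) : ∑ i ∈ Icc (n+1) (2*n+1), (2*n+1).choose i = 4^n := by
  have h1 : ∑ i ∈ range (n+1), (2*n+1).choose i = 4^n := Nat.sum_range_choose_halfway n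
  have h2 : ∑ i ∈ range (2*n+2), (2*n+1).choose i = 2^(2*n+1) := Nat.sum_range_choose (2*n+1)
  have h3 : (∑ i ∈ Ico 0 (n+1), (2*n+1).choose i) + ∑ i ∈ Ico (n+1) (2*n+2), (2*n+1).choose i
      = ∑ i ∈ Ico 0 (2*n+2), (2*n+1).choose i :=
    Finset.sum_Ico_consecutive _ (by omega) (by omega)
  rw [Nat.Ico_zero_eq_range, h1, Nat.Ico_zero_eq_range, h2, show 2*n+2 = 2*n+1+1 from rfl, Finset.Ico_add_one_right_eq_Icc] at h3
  have h4 : 2^(2*n+1) = 2 * 4^n := by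
    rw [pow_succ, pow_mul]
    norm_num
    ring
  omega

lemma prob_count_tail {Ω : Type*} [MeasurableSpace Ω] (Pr : Measure Ω) [IsProbabilityMeasure Pr]
    {ι : Type*} [DecidableEq ι] (Y : ι → Ω → ℝ) (hY : ∀ k, Measurable (Y k))
    (hindep : iIndepFun Y Pr)
    (hY01 : ∀ k ω, Y k ω = 0 ∨ Y k ω = 1)
    (a : ℝ) (ha0 : 0 ≤ a) (ha1 : a ≤ 1)
    (hka : ∀ k, (Pr {ω | 1 ≤ Y k ω}).toReal ≤ a)
    (s : Finset ι) (j : ℕ) :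
    (Pr {ω | (j:ℝ) ≤ ∑ k ∈ s, Y k ω}).toReal ≤ binomTail a s.card j := by
  induction s using Finset.induction generalizing j with
  | empty =>
    cases j with
    | zero =>
      simp only [Finset.sum_empty, Nat.cast_zero, Finset.card_empty]
      rw [binomTail_zero]
      have : {ω : Ω | (0:ℝ) ≤ 0} = Set.univ := by
        ext ω; simp
      rw [this, measure_univ, ENNReal.toReal_one]
    | succ j =>
      have : {ω : Ω | ((j+1:ℕ):ℝ) ≤ ∑ k ∈ (∅ : Finset ι), Y k ω} = ∅ := by
        ext ω
        simp only [Finset.sum_empty, Set.mem_setOf_eq, Set.mem_empty_iff_false, iff_false, not_le]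
        push_cast; positivity
      rw [this]
      simp [binomTail]
  | @insert k s hks ih =>
    have hmsum : Measurable (fun ω => ∑ i ∈ s, Y i ω) := by
      exact Finset.measurable_sum s (fun i _ => hY i)
    have hBk : MeasurableSet {ω | 1 ≤ Y k ω} := by
      have : {ω | 1 ≤ Y k ω} = Y k ⁻¹' Set.Ici 1 := rfl
      rw [this]; exact (hY k) measurableSet_Ici
    cases j with
    | zero =>
      rw [binomTail_zero]
      have h1 := prob_le_one (μ := Pr) (s := {ω | ((0:ℕ):ℝ) ≤ ∑ i ∈ insert k s, Y i ω})
      calc (Pr _).toReal ≤ (1 : ℝ≥0∞).toReal := ENNReal.toReal_mono ENNReal.one_ne_top h1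
        _ = 1 := ENNReal.toReal_one
    | succ j =>
      -- decomposition
      set Bk := {ω | 1 ≤ Y k ω} with hBkdef
      set A1 := (fun ω => ∑ i ∈ s, Y i ω) ⁻¹' Set.Ici ((j:ℝ)) with hA1def
      set A2 := (fun ω => ∑ i ∈ s, Y i ω) ⁻¹' Set.Ici ((j+1:ℕ):ℝ) with hA2def
      have hsub : {ω | ((j+1:ℕ):ℝ) ≤ ∑ i ∈ insert k s, Y i ω}
          ⊆ (Bk ∩ A1) ∪ (Bkᶜ ∩ A2) := by
        intro ω hω
        simp only [Set.mem_setOf_eq, Finset.sum_insert hks] at hω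
        rcases hY01 k ω with h0 | h1
        · right
          constructor
          · simp only [hBkdef, Set.mem_compl_iff, Set.mem_setOf_eq, not_le, h0]; norm_num
          · simp only [hA2def, Set.mem_preimage, Set.mem_Ici]
            rw [h0, zero_add] at hω; exact hω
        · left
          constructor
          · simp only [hBkdef, Set.mem_setOf_eq, h1, le_refl]
          · simp only [hA1def, Set.mem_preimage, Set.mem_Ici]
            rw [h1] at hω; push_cast at hω ⊢; linarith
      -- independence
      have hIF : IndepFun (fun ω => ∑ i ∈ s, Y i ω) (Y k) Pr := by
        have h := hindep.indepFun_finsetSum_of_notMem hY hks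
        have he : (∑ j ∈ s, Y j) = fun ω => ∑ i ∈ s, Y i ω := by
          ext ω; simp [Finset.sum_apply]
        rwa [he] at h
      have hmul1 : Pr (A1 ∩ Bk) = Pr A1 * Pr Bk := by
        have : Bk = Y k ⁻¹' Set.Ici 1 := rfl
        rw [this, hA1def]
        exact hIF.measure_inter_preimage_eq_mul _ _ measurableSet_Ici measurableSet_Ici
      have hmul2 : Pr (A2 ∩ Bkᶜ) = Pr A2 * Pr Bkᶜ := by
        have : Bkᶜ = Y k ⁻¹' (Set.Ici 1)ᶜ := rfl
        rw [this, hA2def]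
        exact hIF.measure_inter_preimage_eq_mul _ _ measurableSet_Ici
          measurableSet_Ici.compl
      -- real numbers
      set p := (Pr Bk).toReal with hpdef
      have hp1 : (Pr Bk) ≤ 1 := prob_le_one
      have hpc : (Pr Bkᶜ).toReal = 1 - p := by
        rw [prob_compl_eq_one_sub hBk, ENNReal.toReal_sub_of_le hp1 ENNReal.one_ne_top,
          ENNReal.toReal_one]
      have hbound : (Pr {ω | ((j+1:ℕ):ℝ) ≤ ∑ i ∈ insert k s, Y i ω}).toReal
          ≤ p * (Pr A1).toReal + (1 - p) * (Pr A2).toReal := by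
        have h1 : Pr {ω | ((j+1:ℕ):ℝ) ≤ ∑ i ∈ insert k s, Y i ω}
            ≤ Pr (Bk ∩ A1) + Pr (Bkᶜ ∩ A2) :=
          le_trans (measure_mono hsub) (measure_union_le _ _)
        rw [Set.inter_comm Bk A1, Set.inter_comm _ A2, hmul1, hmul2] at h1
        have h2 := ENNReal.toReal_mono (by finiteness) h1
        rw [ENNReal.toReal_add (by finiteness) (by finiteness), ENNReal.toReal_mul,
          ENNReal.toReal_mul, hpc] at h2
        linarith [h2]
      have hx := ih j
      have hy := ih (j+1)
      have hA1count : (Pr A1).toReal ≤ binomTail a s.card j := by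
        have : A1 = {ω | ((j:ℕ):ℝ) ≤ ∑ i ∈ s, Y i ω} := rfl
        rw [this]; exact hx
      have hA2count : (Pr A2).toReal ≤ binomTail a s.card (j+1) := by
        have : A2 = {ω | ((j+1:ℕ):ℝ) ≤ ∑ i ∈ s, Y i ω} := rfl
        rw [this]; exact hy
      have hyx : (Pr A2).toReal ≤ (Pr A1).toReal := by
        apply ENNReal.toReal_mono (by finiteness)
        apply measure_mono
        intro ω hω
        simp only [hA1def, hA2def, Set.mem_preimage, Set.mem_Ici] at *
        push_cast at hω ⊢; linarith
      have hpa : p ≤ a := hka k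
      have hp0 : 0 ≤ p := ENNReal.toReal_nonneg
      have hcard : (insert k s).card = s.card + 1 := Finset.card_insert_of_notMem hks
      rw [hcard, binomTail_succ_succ]
      have key : p * (Pr A1).toReal + (1 - p) * (Pr A2).toReal
          ≤ a * (Pr A1).toReal + (1 - a) * (Pr A2).toReal := by nlinarith
      have key2 : a * (Pr A1).toReal + (1 - a) * (Pr A2).toReal
          ≤ a * binomTail a s.card j + (1 - a) * binomTail a s.card (j+1) := by
        have h1a : (0:ℝ) ≤ 1 - a := by linarith
        nlinarith
      linarith


/-- the median trick, Lemma 5 of the paper: if Î₁,…,Î_m are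
independent, each within ε of I with probability at least 1 - a > 1/2, and
m ≥ 2 ln(2α)/ln(4a(1-a)) is odd, then the median Î of Î₁,…,Î_m satisfies
P(|Î - I| ≤ ε) ≥ 1 - α. -/
theorem median_trick {Ω : Type*} [MeasurableSpace Ω]
    (Pr : Measure Ω) [IsProbabilityMeasure Pr]
    (m : ℕ) (hodd : Odd m) (hm0 : 0 < m)
    (Ihat : Fin m → Ω → ℝ) (hIm : ∀ k, Measurable (Ihat k))
    (hindep : iIndepFun Ihat Pr)
    (I ε a α : ℝ) (hε : 0 < ε) (ha0 : 0 < a) (ha : a < 1 / 2)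
    (hα0 : 0 < α) (hα1 : α < 1)
    (hk : ∀ k, 1 - a ≤ (Pr {ω | |Ihat k ω - I| ≤ ε}).toReal)
    (hmlarge : 2 * Real.log (2 * α) / Real.log (4 * a * (1 - a)) ≤ (m : ℝ)) :
    1 - α ≤ (Pr {ω | |medianFin m (fun k => Ihat k ω) - I| ≤ ε}).toReal := by
  obtain ⟨n, hn⟩ := hodd
  -- indicator variables for the "bad" events
  set g : ℝ → ℝ := fun x => if ε < |x - I| then 1 else 0 with hgdef
  have hg : Measurable g := by
    apply Measurable.ite _ measurable_const measurable_const
    have : {x : ℝ | ε < |x - I|} = (fun x => |x - I|) ⁻¹' Set.Ioi ε := rfl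
    rw [this]
    exact ((continuous_abs.comp (continuous_id.sub continuous_const)).measurable) measurableSet_Ioi
  set Y : Fin m → Ω → ℝ := fun k ω => g (Ihat k ω) with hYdef
  have hYmeas : ∀ k, Measurable (Y k) := fun k => hg.comp (hIm k)
  have hYindep : iIndepFun Y Pr :=
    hindep.comp (fun _ => g) (fun _ => hg)
  have hY01 : ∀ k ω, Y k ω = 0 ∨ Y k ω = 1 := by
    intro k ω
    simp only [hYdef, hgdef]
    split <;> simp
  have hka : ∀ k, (Pr {ω | 1 ≤ Y k ω}).toReal ≤ a := by
    intro k
    have hset : {ω | 1 ≤ Y k ω} = {ω | |Ihat k ω - I| ≤ ε}ᶜ := by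
      ext ω
      simp only [hYdef, hgdef, Set.mem_setOf_eq, Set.mem_compl_iff, not_le]
      split <;> rename_i hsp
      · simpa using hsp
      · simp only [not_lt] at hsp
        constructor
        · intro h; norm_num at h
        · intro h; linarith
    have hmeasgood : MeasurableSet {ω | |Ihat k ω - I| ≤ ε} := by
      have : {ω | |Ihat k ω - I| ≤ ε} = (fun ω => |Ihat k ω - I|) ⁻¹' Set.Iic ε := rfl
      rw [this]
      exact ((continuous_abs.measurable).comp ((hIm k).sub measurable_const)) measurableSet_Iic
    rw [hset, prob_compl_eq_one_sub hmeasgood,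
      ENNReal.toReal_sub_of_le prob_le_one ENNReal.one_ne_top, ENNReal.toReal_one]
    have := hk k
    linarith
  -- the bad event
  set E : Set Ω := {ω | ((n+1:ℕ):ℝ) ≤ ∑ k ∈ Finset.univ, Y k ω} with hEdef
  have hEmeas : MeasurableSet E := by
    have : E = (fun ω => ∑ k ∈ Finset.univ, Y k ω) ⁻¹' Set.Ici ((n+1:ℕ):ℝ) := rfl
    rw [this]
    exact (Finset.measurable_sum _ (fun k _ => hYmeas k)) measurableSet_Ici
  -- probability bound on the bad event
  have hEbound : (Pr E).toReal ≤ binomTail a m (n+1) := by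
    have h := prob_count_tail Pr Y hYmeas hYindep hY01 a ha0.le (by linarith)
      hka Finset.univ (n+1)
    rw [Finset.card_univ, Fintype.card_fin] at h
    exact h
  have hq0 : (0:ℝ) < 4 * a * (1 - a) := by nlinarith
  have hq1 : 4 * a * (1 - a) < 1 := by nlinarith [sq_nonneg (1 - 2*a)]
  -- binomial tail bound
  have hbinom : binomTail a m (n+1) ≤ a * (4 * a * (1 - a))^n := by
    have h := binomTail_le (a := a) ha0.le (by linarith) m (n+1)
    have hcsR : (∑ i ∈ Icc (n+1) (2*n+1), ((2*n+1).choose i : ℝ)) = 4^n := by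
      rw [← Nat.cast_sum, cs_half]
      push_cast; ring
    rw [hn] at h ⊢
    have he : 2*n+1 - (n+1) = n := by omega
    rw [he, hcsR] at h
    calc binomTail a (2*n+1) (n+1) ≤ 4^n * a^(n+1) * (1-a)^n := h
      _ = a * (4 * a * (1 - a))^n := by rw [mul_pow, mul_pow, pow_succ]; ring
  -- arithmetic: a * q^n ≤ α
  have harith : a * (4 * a * (1 - a))^n ≤ α := by
    set q : ℝ := 4 * a * (1 - a) with hqd
    have hlogq : Real.log q < 0 := Real.log_neg hq0 hq1
    have hml : (m:ℝ) * Real.log q ≤ 2 * Real.log (2*α) := by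
      rw [div_le_iff_of_neg hlogq] at hmlarge
      exact hmlarge
    have hqm : q^m ≤ (2*α)*(2*α) := by
      have h1 : Real.exp ((m:ℝ) * Real.log q) = q^m := by
        rw [Real.exp_nat_mul, Real.exp_log hq0]
      have h2 : Real.exp (2 * Real.log (2*α)) = (2*α)*(2*α) := by
        rw [two_mul, Real.exp_add, Real.exp_log (by positivity)]
      calc q^m = Real.exp ((m:ℝ) * Real.log q) := h1.symm
        _ ≤ Real.exp (2 * Real.log (2*α)) := Real.exp_le_exp.2 hml
        _ = (2*α)*(2*α) := h2
    have hqpow : q^m = (q^n)^2 * q := by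
      rw [hn, pow_succ, ← pow_mul, mul_comm n 2]
    rw [hqpow] at hqm
    have hu0 : (0:ℝ) < q^n := pow_pos hq0 n
    apply le_of_pow_le_pow_left₀ two_ne_zero hα0.le
    have hqm' : (q^n)^2 * (4*a*(1-a)) ≤ 2*α*(2*α) := by rw [← hqd]; exact hqm
    have h3 : (0:ℝ) ≤ (1-a) * (α^2 - (a * q^n)^2) := by
      nlinarith [mul_le_mul_of_nonneg_left hqm' ha0.le,
        mul_nonneg (show (0:ℝ) ≤ 1 - 2*a by linarith) (sq_nonneg α)]
    nlinarith [h3, show (0:ℝ) < 1 - a by linarith]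
  -- complement of the bad event is contained in the good event
  have hEc : Eᶜ ⊆ {ω | |medianFin m (fun k => Ihat k ω) - I| ≤ ε} := by
    intro ω hω
    simp only [hEdef, Set.mem_compl_iff, Set.mem_setOf_eq, not_le] at hω
    -- counting
    have hsum : ∑ k ∈ Finset.univ, Y k ω
        = ((Finset.univ.filter (fun k => ε < |Ihat k ω - I|)).card : ℝ) := by
      simp only [hYdef, hgdef]
      rw [Finset.sum_boole]
    rw [hsum] at hω
    have hNle : (Finset.univ.filter (fun k => ε < |Ihat k ω - I|)).card ≤ n := by
      by_contra hcon
      push_neg at hcon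
      have : ((n+1:ℕ):ℝ) ≤ ((Finset.univ.filter (fun k => ε < |Ihat k ω - I|)).card : ℝ) := by
        exact_mod_cast hcon
      linarith
    have hGcard : n + 1 ≤ (Finset.univ.filter (fun k => |Ihat k ω - I| ≤ ε)).card := by
      have := Finset.card_filter_add_card_filter_not
        (s := (Finset.univ : Finset (Fin m))) (p := fun k => ε < |Ihat k ω - I|)
      have hcongr : (Finset.univ.filter (fun k => ¬ (ε < |Ihat k ω - I|)))
          = Finset.univ.filter (fun k => |Ihat k ω - I| ≤ ε) := by
        apply Finset.filter_congr
        intro k _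
        simp [not_lt]
      rw [hcongr, Finset.card_univ, Fintype.card_fin] at this
      omega
    -- the sorted list
    set v : Fin m → ℝ := fun k => Ihat k ω with hvdef
    set l : List ℝ := ((Multiset.map v (Finset.univ : Finset (Fin m)).val).sort (· ≤ ·))
      with hldef
    have hsorted : l.Pairwise (· ≤ ·) := Multiset.pairwise_sort _ _
    have hlen : l.length = m := by
      rw [hldef, Multiset.length_sort, Multiset.card_map]
      exact Finset.card_univ.trans (Fintype.card_fin m)
    have hmed : medianFin m v = l.getD n 0 := by
      rw [medianFin]
      congr 1
      omega
    have hcountP : ∀ (p : ℝ → Prop) [DecidablePred p],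
        l.countP (fun x => decide (p x)) = (Finset.univ.filter (fun k => p (v k))).card := by
      intro p hp
      have h1 : (l.countP (fun x => decide (p x))) = Multiset.countP p
          (Multiset.map v (Finset.univ : Finset (Fin m)).val) := by
        conv_rhs => rw [← Multiset.sort_eq (Multiset.map v (Finset.univ : Finset (Fin m)).val) (· ≤ ·)]
        rw [← hldef, Multiset.coe_countP]
      rw [h1, Multiset.countP_map]
      rfl
    have hgood_le : ∀ k, |Ihat k ω - I| ≤ ε → v k ≤ I + ε := by
      intro k hk'
      have := abs_le.1 hk'
      simp only [hvdef]
      linarith [this.2]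
    have hgood_ge : ∀ k, |Ihat k ω - I| ≤ ε → I - ε ≤ v k := by
      intro k hk'
      have := abs_le.1 hk'
      simp only [hvdef]
      linarith [this.1]
    have hcount1 : n + 1 ≤ l.countP (fun x => decide (x ≤ I + ε)) := by
      rw [hcountP (fun x => x ≤ I + ε)]
      refine le_trans hGcard (Finset.card_le_card ?_)
      intro k hk'
      simp only [Finset.mem_filter, Finset.mem_univ, true_and] at hk' ⊢
      exact hgood_le k hk'
    have hcount2 : n + 1 ≤ l.countP (fun x => decide (I - ε ≤ x)) := by
      rw [hcountP (fun x => I - ε ≤ x)]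
      refine le_trans hGcard (Finset.card_le_card ?_)
      intro k hk'
      simp only [Finset.mem_filter, Finset.mem_univ, true_and] at hk' ⊢
      exact hgood_ge k hk'
    have hnlen : n < l.length := by omega
    have hub : l.getD n 0 ≤ I + ε :=
      sorted_getD_le_of_countP l hsorted n hnlen (I + ε) hcount1
    have hlb : I - ε ≤ l.getD n 0 :=
      le_sorted_getD_of_countP l hsorted n hnlen (I - ε) (by omega)
    rw [Set.mem_setOf_eq, hmed]
    rw [abs_le]
    constructor <;> linarith
  -- conclusion
  have h1 : Pr Eᶜ ≤ Pr {ω | |medianFin m (fun k => Ihat k ω) - I| ≤ ε} := measure_mono hEc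
  have h2 : (Pr Eᶜ).toReal = 1 - (Pr E).toReal := by
    rw [prob_compl_eq_one_sub hEmeas,
      ENNReal.toReal_sub_of_le prob_le_one ENNReal.one_ne_top, ENNReal.toReal_one]
  have h3 : (Pr Eᶜ).toReal ≤ (Pr {ω | |medianFin m (fun k => Ihat k ω) - I| ≤ ε}).toReal :=
    ENNReal.toReal_mono (by finiteness) h1
  have h4 : (Pr E).toReal ≤ α := le_trans hEbound (le_trans hbinom harith)
  linarith
end

section
/- Let P be a Markov kernel with invariant π, V ≥ 1, and suppose |||P^k − π|||_{V^{1/r}} ≤ M_r γ_r^k for all k ≥ 1, with γ_r < 1. Let f_c satisfy πf_c = 0, |f_c| ≤ V^{1/r} and |f_c| ≤ V^{1−1/r} pointwise. Then for any probability measure π₀ with ‖π₀P^i − π‖_V ≤ CMγ^i (C ≥ 0, γ < 1, M < ∞), the off-diagonal covariance sum satisfies (2/n)∑_{i=0}^{n−2}∑_{j=i+1}^{n−1} E_{π₀}[f_c(X_i)f_c(X_j)] ≤ (2M_rγ_r/(1−γ_r))·(πV + CM/(n(1−γ))). -/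
open MeasureTheory ProbabilityTheory

lemma isProbabilityMeasure_evolve {X : Type*} [MeasurableSpace X] (P : Kernel X X)
    [IsMarkovKernel P] (μ : Measure X) [IsProbabilityMeasure μ] (n : ℕ) :
    IsProbabilityMeasure (evolve P μ n) := by
  induction n with
  | zero => simpa [evolve] using ‹IsProbabilityMeasure μ›
  | succ m ih =>
    have h : evolve P μ (m + 1) = kstep P (evolve P μ m) := by
      simp [evolve, Function.iterate_succ_apply']
    rw [h]
    constructor
    rw [kstep, Measure.bind_apply MeasurableSet.univ (Kernel.measurable P).aemeasurable]
    simp [ih.measure_univ]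

lemma integrable_of_truncated_bound {X : Type*} [MeasurableSpace X] (μ : Measure X)
    [IsProbabilityMeasure μ] (V : X → ℝ) (hVm : Measurable V) (hV1 : ∀ x, 1 ≤ V x)
    (K : ℝ)
    (hb : ∀ g : X → ℝ, Measurable g → (∀ x, |g x| ≤ V x) → ∫ x, g x ∂μ ≤ K) :
    Integrable V μ := by
  have h0 : ∀ x, (0:ℝ) ≤ V x := fun x => le_trans zero_le_one (hV1 x)
  set g : ℕ → X → ℝ := fun N x => min (V x) N with hg
  have hgm : ∀ N, Measurable (g N) := fun N => hVm.min measurable_const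
  have hg0 : ∀ N x, 0 ≤ g N x := fun N x => le_min (h0 x) (Nat.cast_nonneg N)
  have hgV : ∀ N x, |g N x| ≤ V x := fun N x => by
    rw [abs_of_nonneg (hg0 N x)]; exact min_le_left _ _
  have hgint : ∀ N, Integrable (g N) μ := fun N =>
    (integrable_const (N:ℝ)).mono' ((hgm N).aestronglyMeasurable)
      (Filter.Eventually.of_forall fun x => by
        rw [Real.norm_eq_abs, abs_of_nonneg (hg0 N x)]; exact min_le_right _ _)
  have hlt : ∀ N, ∫⁻ x, ENNReal.ofReal (g N x) ∂μ ≤ ENNReal.ofReal K := fun N => by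
    rw [← ofReal_integral_eq_lintegral_ofReal (hgint N)
      (Filter.Eventually.of_forall (hg0 N))]
    exact ENNReal.ofReal_le_ofReal (hb (g N) (hgm N) (hgV N))
  have hsup : ∫⁻ x, ENNReal.ofReal (V x) ∂μ ≤ ENNReal.ofReal K := by
    have hmono : Monotone (fun N x => ENNReal.ofReal (g N x)) := by
      intro a b hab x
      exact ENNReal.ofReal_le_ofReal (min_le_min le_rfl (Nat.cast_le.2 hab))
    have heq : ∫⁻ x, ENNReal.ofReal (V x) ∂μ
        = ⨆ N, ∫⁻ x, ENNReal.ofReal (g N x) ∂μ := by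
      rw [← lintegral_iSup (fun N => (hgm N).ennreal_ofReal) hmono]
      congr 1; funext x
      apply le_antisymm
      · refine le_iSup_of_le (Nat.ceil (V x)) ?_
        have : g (Nat.ceil (V x)) x = V x := min_eq_left (Nat.le_ceil _)
        rw [this]
      · exact iSup_le fun N => ENNReal.ofReal_le_ofReal (min_le_left _ _)
    rw [heq]
    exact iSup_le hlt
  refine ⟨hVm.aestronglyMeasurable, ?_⟩
  rw [hasFiniteIntegral_iff_ofReal (Filter.Eventually.of_forall h0)]
  exact lt_of_le_of_lt hsup ENNReal.ofReal_lt_top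

lemma geom_sum_le_aux {x : ℝ} (h0 : 0 ≤ x) (h1 : x < 1) (m : ℕ) :
    ∑ t ∈ Finset.range m, x ^ t ≤ 1 / (1 - x) := by
  rw [geom_sum_eq (ne_of_lt h1) m]
  have hd : (0:ℝ) < 1 - x := by linarith
  have : (x ^ m - 1) / (x - 1) = (1 - x ^ m) / (1 - x) := by
    rw [div_eq_div_iff (by linarith) (ne_of_gt hd)]; ring
  rw [this]
  have hnum : 1 - x ^ m ≤ 1 := by nlinarith [pow_nonneg h0 m]
  gcongr

/-- bound on the off-diagonal covariance sum
(2/n) ∑_{i=0}^{n-2} ∑_{j=i+1}^{n-1} E_{π₀}[f_c(X_i) f_c(X_j)]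
  ≤ (2 M_r γ_r/(1-γ_r)) (πV + CM/(n(1-γ))),
where E_{π₀}[f_c(X_i) f_c(X_j)] = π₀(Pⁱ(f_c · P^{j-i} f_c)).  The V^{1/r}-norm
ergodicity hypothesis and the bound ‖π₀Pⁱ - π‖_V ≤ CMγⁱ are expressed via the
defining property of the V-norm distance. -/
theorem offdiagonal_covariance_bound {X : Type*} [MeasurableSpace X]
    (P : Kernel X X) [IsMarkovKernel P]
    (V : X → ℝ) (hVm : Measurable V) (hV1 : ∀ x, 1 ≤ V x)
    (π π₀ : Measure X) [IsProbabilityMeasure π] [IsProbabilityMeasure π₀]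
    (hinv : π.bind (fun x => P x) = π)
    (hπV : Integrable V π) (hπ₀V : Integrable V π₀)
    (r : ℝ) (hr : 1 < r)
    (Mr γr : ℝ) (hMr : 0 < Mr) (hγr0 : 0 < γr) (hγr1 : γr < 1)
    (hErgVr : ∀ (x : X) (k : ℕ) (g : X → ℝ), Measurable g →
      (∀ y, |g y| ≤ (V y) ^ (1 / r)) → 1 ≤ k →
      |∫ y, g y ∂(evolve P (Measure.dirac x) k) - ∫ y, g y ∂π| ≤
        Mr * γr ^ k * (V x) ^ (1 / r))
    (fc : X → ℝ) (hfcm : Measurable fc)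
    (hfcπ : ∫ x, fc x ∂π = 0)
    (hfc₁ : ∀ x, |fc x| ≤ (V x) ^ (1 / r))
    (hfc₂ : ∀ x, |fc x| ≤ (V x) ^ (1 - 1 / r))
    (C M γ : ℝ) (hC : 0 ≤ C) (hM : 0 < M) (hγ0 : 0 < γ) (hγ1 : γ < 1)
    (hconv : ∀ (i : ℕ) (g : X → ℝ), Measurable g → (∀ x, |g x| ≤ V x) →
      |∫ x, g x ∂(evolve P π₀ i) - ∫ x, g x ∂π| ≤ C * M * γ ^ i)
    (n : ℕ) (hn : 1 ≤ n) :
    (2 / (n : ℝ)) * ∑ i ∈ Finset.range (n - 1), ∑ j ∈ Finset.Ico (i + 1) n,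
        ∫ x, fc x * (∫ y, fc y ∂(evolve P (Measure.dirac x) (j - i)))
          ∂(evolve P π₀ i) ≤
      (2 * Mr * γr / (1 - γr)) *
        (∫ x, V x ∂π + C * M / (n * (1 - γ))) := by
  have hn0 : (0:ℝ) < n := by exact_mod_cast hn
  have habs : ∀ x, (0:ℝ) ≤ V x := fun x => le_trans zero_le_one (hV1 x)
  have hπV0 : 0 ≤ ∫ x, V x ∂π := integral_nonneg habs
  have h1γr : (0:ℝ) < 1 - γr := by linarith
  have h1γ : (0:ℝ) < 1 - γ := by linarith
  set pV := ∫ x, V x ∂π with hpV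
  have hμprob : ∀ i, IsProbabilityMeasure (evolve P π₀ i) :=
    fun i => isProbabilityMeasure_evolve P π₀ i
  have hbK : ∀ (i : ℕ) (g : X → ℝ), Measurable g → (∀ x, |g x| ≤ V x) →
      ∫ x, g x ∂(evolve P π₀ i) ≤ pV + C * M * γ ^ i := by
    intro i g hg hgV
    have h1 := hconv i g hg hgV
    have h2 : ∫ x, g x ∂π ≤ pV := by
      by_cases hgi : Integrable g π
      · exact integral_mono hgi hπV fun x => (le_abs_self _).trans (hgV x)
      · rw [integral_undef hgi]; exact hπV0
    have h3 := (abs_le.1 h1).2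
    linarith
  have hVint : ∀ i, Integrable V (evolve P π₀ i) := fun i => by
    haveI := hμprob i
    exact integrable_of_truncated_bound _ V hVm hV1 _ (hbK i)
  have hVval : ∀ i, ∫ x, V x ∂(evolve P π₀ i) ≤ pV + C * M * γ ^ i := fun i =>
    hbK i V hVm (fun x => by rw [abs_of_nonneg (habs x)])
  have hBi : ∀ i : ℕ, (0:ℝ) ≤ pV + C * M * γ ^ i := fun i =>
    add_nonneg hπV0 (by positivity)
  have hterm : ∀ i ∈ Finset.range (n-1), ∀ j ∈ Finset.Ico (i+1) n,
      ∫ x, fc x * (∫ y, fc y ∂(evolve P (Measure.dirac x) (j - i)))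
        ∂(evolve P π₀ i)
      ≤ Mr * γr ^ (j - i) * (pV + C * M * γ ^ i) := by
    intro i _ j hj
    set k := j - i with hk
    have hk1 : 1 ≤ k := by
      have := (Finset.mem_Ico.1 hj).1; omega
    have hinner : ∀ x, |∫ y, fc y ∂(evolve P (Measure.dirac x) k)| ≤
        Mr * γr ^ k * (V x) ^ (1/r) := fun x => by
      have := hErgVr x k fc hfcm hfc₁ hk1
      rwa [hfcπ, sub_zero] at this
    have hbound : ∀ x, |fc x * (∫ y, fc y ∂(evolve P (Measure.dirac x) k))| ≤
        Mr * γr ^ k * V x := by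
      intro x
      have hVpos : (0:ℝ) < V x := lt_of_lt_of_le zero_lt_one (hV1 x)
      rw [abs_mul]
      calc |fc x| * |∫ y, fc y ∂(evolve P (Measure.dirac x) k)|
          ≤ (V x) ^ (1 - 1/r) * (Mr * γr ^ k * (V x) ^ (1/r)) :=
            mul_le_mul (hfc₂ x) (hinner x) (abs_nonneg _)
              (Real.rpow_nonneg (le_of_lt hVpos) _)
        _ = Mr * γr ^ k * ((V x) ^ (1 - 1/r) * (V x) ^ (1/r)) := by ring
        _ = Mr * γr ^ k * V x := by
            rw [← Real.rpow_add hVpos]; norm_num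
    have hgint : Integrable (fun x => Mr * γr ^ k * V x) (evolve P π₀ i) :=
      (hVint i).const_mul _
    have hni := norm_integral_le_of_norm_le hgint
      (Filter.Eventually.of_forall fun x => by
        rw [Real.norm_eq_abs]; exact hbound x)
    calc ∫ x, fc x * (∫ y, fc y ∂(evolve P (Measure.dirac x) k))
            ∂(evolve P π₀ i)
        ≤ |∫ x, fc x * (∫ y, fc y ∂(evolve P (Measure.dirac x) k))
            ∂(evolve P π₀ i)| := le_abs_self _
      _ ≤ ∫ x, Mr * γr ^ k * V x ∂(evolve P π₀ i) := by
          rw [← Real.norm_eq_abs]; exact hni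
      _ = Mr * γr ^ k * ∫ x, V x ∂(evolve P π₀ i) := integral_const_mul _ _
      _ ≤ Mr * γr ^ k * (pV + C * M * γ ^ i) :=
          mul_le_mul_of_nonneg_left (hVval i) (by positivity)
  have hinner_sum : ∀ i : ℕ,
      ∑ j ∈ Finset.Ico (i+1) n, Mr * γr ^ (j - i) * (pV + C * M * γ ^ i)
      ≤ Mr * γr / (1 - γr) * (pV + C * M * γ ^ i) := by
    intro i
    rw [Finset.sum_Ico_eq_sum_range]
    have he : ∀ t ∈ Finset.range (n - (i+1)),
        Mr * γr ^ ((i+1+t) - i) * (pV + C * M * γ ^ i)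
        = (Mr * γr * (pV + C * M * γ ^ i)) * γr ^ t := by
      intro t _
      have h : (i+1+t) - i = t + 1 := by omega
      rw [h, pow_succ]; ring
    rw [Finset.sum_congr rfl he, ← Finset.mul_sum]
    have hg := geom_sum_le_aux (le_of_lt hγr0) hγr1 (n - (i+1))
    have hcoef : (0:ℝ) ≤ Mr * γr * (pV + C * M * γ ^ i) :=
      mul_nonneg (by positivity) (hBi i)
    calc (Mr * γr * (pV + C * M * γ ^ i)) * ∑ t ∈ Finset.range (n - (i+1)), γr ^ t
        ≤ (Mr * γr * (pV + C * M * γ ^ i)) * (1 / (1 - γr)) :=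
          mul_le_mul_of_nonneg_left hg hcoef
      _ = Mr * γr / (1 - γr) * (pV + C * M * γ ^ i) := by ring
  have houter : ∑ i ∈ Finset.range (n-1),
      Mr * γr / (1 - γr) * (pV + C * M * γ ^ i)
      ≤ Mr * γr / (1 - γr) * ((n:ℝ) * pV + C * M / (1 - γ)) := by
    rw [← Finset.mul_sum]
    refine mul_le_mul_of_nonneg_left ?_ (by positivity)
    have hg := geom_sum_le_aux (le_of_lt hγ0) hγ1 (n-1)
    have hcard : ((n-1 : ℕ):ℝ) ≤ (n:ℝ) := by
      exact_mod_cast Nat.sub_le n 1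
    calc ∑ i ∈ Finset.range (n-1), (pV + C * M * γ ^ i)
        = ((n-1:ℕ):ℝ) * pV + C * M * ∑ i ∈ Finset.range (n-1), γ ^ i := by
          rw [Finset.sum_add_distrib, Finset.sum_const, ← Finset.mul_sum,
            nsmul_eq_mul, Finset.card_range]
      _ ≤ (n:ℝ) * pV + C * M * (1 / (1 - γ)) :=
          add_le_add (mul_le_mul_of_nonneg_right hcard hπV0)
            (mul_le_mul_of_nonneg_left hg (by positivity))
      _ = (n:ℝ) * pV + C * M / (1 - γ) := by ring
  have hchain : ∑ i ∈ Finset.range (n - 1), ∑ j ∈ Finset.Ico (i + 1) n,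
      ∫ x, fc x * (∫ y, fc y ∂(evolve P (Measure.dirac x) (j - i)))
        ∂(evolve P π₀ i)
      ≤ Mr * γr / (1 - γr) * ((n:ℝ) * pV + C * M / (1 - γ)) := by
    refine le_trans (Finset.sum_le_sum fun i hi => ?_) houter
    exact le_trans (Finset.sum_le_sum (hterm i hi)) (hinner_sum i)
  calc (2 / (n : ℝ)) * ∑ i ∈ Finset.range (n - 1), ∑ j ∈ Finset.Ico (i + 1) n,
        ∫ x, fc x * (∫ y, fc y ∂(evolve P (Measure.dirac x) (j - i)))
          ∂(evolve P π₀ i)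
      ≤ (2 / (n : ℝ)) * (Mr * γr / (1 - γr) * ((n:ℝ) * pV + C * M / (1 - γ))) :=
        mul_le_mul_of_nonneg_left hchain (by positivity)
    _ = (2 * Mr * γr / (1 - γr)) * (pV + C * M / ((n:ℝ) * (1 - γ))) := by
        field_simp
end
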